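/- Strong duality for the decision-dependent distributionally robust second level: if the ambiguity set P(μ) is nonempty, then there exist q* ∈ P(μ) and a dual feasible point (ψ⁺*, ψ⁻*, φ*) such that Σ_{a∈𝒜} q* a · H a = Σ_{l∈L} ψ⁺* l · μ l + φ*; moreover q* maximizes Σ_{a∈𝒜} q a · H a over all q ∈ P(μ), and (ψ⁺*, ψ⁻*, φ*) minimizes the dual objective value over all dual feasible points. -/

import Mathlib

open Finset
open scoped InnerProductSpace

lemma cone_caratheodory {ι : Type*} [Fintype ι] [DecidableEq ι] {H : Type*}
    [AddCommGroup H] [Module ℝ H] (v : ι → H) :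
    ∀ s : Finset ι, ∀ c : ι → ℝ, (∀ i, 0 ≤ c i) →
    ∃ t ⊆ s, LinearIndependent ℝ (fun i : ↑t => v i) ∧
      ∃ d : ι → ℝ, (∀ i, 0 ≤ d i) ∧ ∑ i ∈ t, d i • v i = ∑ i ∈ s, c i • v i := by
  intro s
  induction s using Finset.strongInduction with
  | _ s ih =>
    intro c hc
    by_cases hli : LinearIndependent ℝ (fun i : ↑s => v i)
    · exact ⟨s, le_refl _, hli, c, hc, rfl⟩
    · obtain ⟨g, hg0, j, hgj⟩ := Fintype.not_linearIndependent_iff.mp hli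
      set d : ι → ℝ := fun i => if h : i ∈ s then g ⟨i, h⟩ else 0 with hd
      have hdsum : ∑ i ∈ s, d i • v i = 0 := by
        rw [← Finset.sum_attach s (fun i => d i • v i)]
        simpa [hd] using hg0
      have hdj : d (j : ι) ≠ 0 := by simpa [hd, j.2] using hgj
      have hdout : ∀ i ∉ s, d i = 0 := by intro i hi; simp [hd, hi]
      have key : ∀ e : ι → ℝ, (∑ i ∈ s, e i • v i = 0) → (∀ i ∉ s, e i = 0) →
          (∃ i ∈ s, 0 < e i) →
          ∃ t ⊆ s, LinearIndependent ℝ (fun i : ↑t => v i) ∧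
            ∃ d : ι → ℝ, (∀ i, 0 ≤ d i) ∧ ∑ i ∈ t, d i • v i = ∑ i ∈ s, c i • v i := by
        rintro e hesum heout ⟨i1, hi1s, hi1⟩
        set P := s.filter (fun i => 0 < e i) with hP
        have hPne : P.Nonempty := ⟨i1, by simp [hP, hi1s, hi1]⟩
        obtain ⟨i0, hi0P, hi0min⟩ := P.exists_min_image (fun i => c i / e i) hPne
        have hi0s : i0 ∈ s := (Finset.mem_filter.mp hi0P).1
        have hei0 : 0 < e i0 := (Finset.mem_filter.mp hi0P).2
        set r := c i0 / e i0 with hr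
        have hr0 : 0 ≤ r := div_nonneg (hc i0) hei0.le
        set c' : ι → ℝ := fun i => c i - r * e i with hc'
        have hc'0 : ∀ i, 0 ≤ c' i := by
          intro i
          by_cases hie : 0 < e i
          · have his : i ∈ s := by
              by_contra h; rw [heout i h] at hie; exact lt_irrefl 0 hie
            have hmin := hi0min i (Finset.mem_filter.mpr ⟨his, hie⟩)
            have : r * e i ≤ c i := by
              rw [le_div_iff₀ hie] at hmin
              linarith
            simp only [hc']; linarith
          · have : r * e i ≤ 0 := mul_nonpos_of_nonneg_of_nonpos hr0 (not_lt.mp hie)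
            simp only [hc']; linarith [hc i]
        have hc'i0 : c' i0 = 0 := by
          simp only [hc', hr]; field_simp; ring
        have hsum' : ∑ i ∈ s.erase i0, c' i • v i = ∑ i ∈ s, c i • v i := by
          rw [Finset.sum_erase _ (by rw [hc'i0, zero_smul])]
          have : ∑ i ∈ s, c' i • v i
              = ∑ i ∈ s, c i • v i - r • ∑ i ∈ s, e i • v i := by
            rw [Finset.smul_sum, ← Finset.sum_sub_distrib]
            congr 1; ext i
            simp only [hc', sub_smul, smul_smul]
          rw [this, hesum, smul_zero, sub_zero]
        obtain ⟨t, hts, hli', d', hd'0, hd'sum⟩ :=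
          ih (s.erase i0) (Finset.erase_ssubset hi0s) c' hc'0
        exact ⟨t, hts.trans (Finset.erase_subset _ _), hli', d', hd'0, by rw [hd'sum, hsum']⟩
      rcases (lt_or_gt_of_ne hdj) with hneg | hpos
      · refine key (fun i => -d i) ?_ (fun i hi => by simp [hdout i hi]) ⟨j, j.2, by simpa using hneg⟩
        simp only [neg_smul, Finset.sum_neg_distrib, hdsum, neg_zero]
      · exact key d hdsum hdout ⟨j, j.2, hpos⟩

lemma cone_fg_isClosed {ι : Type*} [Fintype ι] [DecidableEq ι] {H : Type*}
    [NormedAddCommGroup H] [InnerProductSpace ℝ H] [FiniteDimensional ℝ H]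
    (v : ι → H) :
    IsClosed {x : H | ∃ c : ι → ℝ, (∀ i, 0 ≤ c i) ∧ ∑ i, c i • v i = x} := by
  classical
  have hunion : {x : H | ∃ c : ι → ℝ, (∀ i, 0 ≤ c i) ∧ ∑ i, c i • v i = x}
      = ⋃ t ∈ {t : Finset ι | LinearIndependent ℝ (fun i : ↑t => v i)},
          (fun c : ↑t → ℝ => ∑ i, c i • v (i : ι)) '' {c | ∀ i, 0 ≤ c i} := by
    ext x
    simp only [Set.mem_setOf_eq, Set.mem_iUnion, Set.mem_image, exists_prop]
    constructor
    · rintro ⟨c, hc, rfl⟩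
      obtain ⟨t, -, hli, d, hd, hsum⟩ := cone_caratheodory v Finset.univ c hc
      refine ⟨t, hli, fun i => d i, fun i => hd i, ?_⟩
      rw [← hsum, ← Finset.sum_attach t (fun i => d i • v i)]; rfl
    · rintro ⟨t, ht, c, hc, rfl⟩
      refine ⟨fun i => if h : i ∈ t then c ⟨i, h⟩ else 0, fun i => by by_cases h : i ∈ t <;> simp [h, hc], ?_⟩
      rw [← Finset.sum_subset (Finset.subset_univ t)
        (by intro i _ hi; simp [hi]),
        ← Finset.sum_attach t (fun i => (if h : i ∈ t then c ⟨i, h⟩ else 0) • v i)]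
      exact Finset.sum_congr rfl (fun i _ => by rw [dif_pos i.2])
  rw [hunion]
  refine Set.Finite.isClosed_biUnion (Set.toFinite _) ?_
  intro t hli
  have hker : LinearMap.ker (Fintype.linearCombination ℝ (fun i : ↑t => v i)) = ⊥ := by
    rw [LinearMap.ker_eq_bot']
    intro c hc
    rw [Fintype.linearCombination_apply] at hc
    exact funext (Fintype.linearIndependent_iff.mp hli c hc)
  have hce := LinearMap.isClosedEmbedding_of_injective hker
  have : ((fun c : ↑t → ℝ => ∑ i, c i • v (i:ι)) '' {c | ∀ i, 0 ≤ c i})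
      = (Fintype.linearCombination ℝ (fun i : ↑t => v i)) '' {c | ∀ i, 0 ≤ c i} := by
    apply Set.image_congr
    intro c _
    rw [Fintype.linearCombination_apply]
  rw [this]
  refine hce.isClosedMap _ ?_
  have : {c : ↑t → ℝ | ∀ i, 0 ≤ c i} = ⋂ i, (fun c : ↑t → ℝ => c i) ⁻¹' (Set.Ici 0) := by
    ext c; simp [Set.mem_iInter]
  rw [this]
  exact isClosed_iInter (fun i => isClosed_Ici.preimage (continuous_apply i))

open scoped InnerProductSpace in
lemma farkas_cone {ι : Type*} [Fintype ι] [DecidableEq ι] {H : Type*}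
    [NormedAddCommGroup H] [InnerProductSpace ℝ H] [FiniteDimensional ℝ H]
    (v : ι → H) (b : H) :
    (∃ c : ι → ℝ, (∀ i, 0 ≤ c i) ∧ ∑ i, c i • v i = b) ∨
    (∃ y : H, (∀ i, 0 ≤ ⟪v i, y⟫_ℝ) ∧ ⟪y, b⟫_ℝ < 0) := by
  classical
  by_cases hb : ∃ c : ι → ℝ, (∀ i, 0 ≤ c i) ∧ ∑ i, c i • v i = b
  · exact Or.inl hb
  · right
    set K : ConvexCone ℝ H :=
      { carrier := {x : H | ∃ c : ι → ℝ, (∀ i, 0 ≤ c i) ∧ ∑ i, c i • v i = x}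
        smul_mem' := by
          rintro r hr x ⟨c, hc, rfl⟩
          exact ⟨fun i => r * c i, fun i => mul_nonneg hr.le (hc i), by
            rw [Finset.smul_sum]; exact Finset.sum_congr rfl fun i _ => by
              rw [mul_smul]⟩
        add_mem' := by
          rintro x ⟨c, hc, rfl⟩ y ⟨c', hc', rfl⟩
          exact ⟨fun i => c i + c' i, fun i => add_nonneg (hc i) (hc' i), by
            rw [← Finset.sum_add_distrib]; exact Finset.sum_congr rfl fun i _ => by
              rw [add_smul]⟩ } with hK
    have hne : (K : Set H).Nonempty := ⟨0, ⟨0, fun i => le_refl 0, by simp⟩⟩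
    have hcl : IsClosed (K : Set H) := cone_fg_isClosed v
    obtain ⟨y, hy1, hy2⟩ :=
      ProperCone.hyperplane_separation' ⟨K.toPointedCone (.of_nonempty_of_isClosed hne hcl), hcl⟩ hb
    refine ⟨y, fun i => ?_, by rwa [real_inner_comm]⟩
    refine hy1 (v i) (show v i ∈ K from ⟨fun j => if j = i then 1 else 0, fun j => by positivity, ?_⟩)
    simp [ite_smul]

lemma weak_duality_ddu {L : Type*} [Fintype L]
    (𝒜 : Finset (L → ℝ)) (hbin : ∀ a ∈ 𝒜, ∀ l : L, a l = 0 ∨ a l = 1)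
    (μ : L → ℝ) (H : (L → ℝ) → ℝ)
    (q : (L → ℝ) → ℝ) (hq0 : ∀ a ∈ 𝒜, 0 ≤ q a) (hq1 : ∑ a ∈ 𝒜, q a = 1)
    (hqc : ∀ l : L, ∑ a ∈ 𝒜, q a * (1 - a l) ≤ μ l)
    (ψp ψm : L → ℝ) (φ : ℝ) (hψp : ∀ l, 0 ≤ ψp l) (hψm : ∀ l, 0 ≤ ψm l)
    (hd : ∀ a ∈ 𝒜, ∑ l : L, (ψp l - ψm l) * (1 - a l) + φ ≥ H a) :
    ∑ a ∈ 𝒜, q a * H a ≤ ∑ l : L, ψp l * μ l + φ := by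
  have ht0 : ∀ l, 0 ≤ ∑ a ∈ 𝒜, q a * (1 - a l) := by
    intro l
    refine Finset.sum_nonneg fun a ha => mul_nonneg (hq0 a ha) ?_
    rcases hbin a ha l with h | h <;> simp [h]
  calc ∑ a ∈ 𝒜, q a * H a
      ≤ ∑ a ∈ 𝒜, q a * (∑ l : L, (ψp l - ψm l) * (1 - a l) + φ) := by
        refine Finset.sum_le_sum fun a ha => mul_le_mul_of_nonneg_left (hd a ha) (hq0 a ha)
    _ = ∑ l : L, (ψp l - ψm l) * (∑ a ∈ 𝒜, q a * (1 - a l)) + φ := by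
        simp only [mul_add, Finset.sum_add_distrib, ← Finset.sum_mul, hq1, one_mul,
          Finset.mul_sum]
        rw [Finset.sum_comm]
        congr 1
        refine Finset.sum_congr rfl fun a _ => Finset.sum_congr rfl fun l _ => by ring
    _ ≤ ∑ l : L, ψp l * (∑ a ∈ 𝒜, q a * (1 - a l)) + φ := by
        refine add_le_add_left (Finset.sum_le_sum fun l _ => ?_) φ
        nlinarith [mul_nonneg (hψm l) (ht0 l)]
    _ ≤ ∑ l : L, ψp l * μ l + φ := by
        refine add_le_add_left (Finset.sum_le_sum fun l _ => ?_) φ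
        exact mul_le_mul_of_nonneg_left (hqc l) (hψp l)

lemma primal_attained {L : Type*} [Fintype L]
    (𝒜 : Finset (L → ℝ)) (μ : L → ℝ) (H : (L → ℝ) → ℝ)
    (T : Set (↑𝒜 → ℝ))
    (hT : T = {q : ↑𝒜 → ℝ | (∀ i, 0 ≤ q i) ∧ (∑ i, q i) = 1 ∧
      ∀ l : L, ∑ i, q i * (1 - (i : L → ℝ) l) ≤ μ l})
    (hTne : T.Nonempty) :
    ∃ qopt ∈ T, ∀ q ∈ T, ∑ i, q i * H (i : L → ℝ) ≤ ∑ i, qopt i * H (i : L → ℝ) := by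
  classical
  have hsub : T ⊆ Set.Icc (0 : ↑𝒜 → ℝ) 1 := by
    rintro q hq
    rw [hT] at hq
    obtain ⟨h0, h1, -⟩ := hq
    refine ⟨fun i => h0 i, fun i => ?_⟩
    calc q i ≤ ∑ j, q j := Finset.single_le_sum (fun j _ => h0 j) (Finset.mem_univ i)
      _ = 1 := h1
  have hc1 : Continuous fun q : ↑𝒜 → ℝ => ∑ i, q i :=
    continuous_finset_sum _ fun i _ => continuous_apply i
  have hc2 : ∀ l : L, Continuous fun q : ↑𝒜 → ℝ => ∑ i, q i * (1 - (i : L → ℝ) l) :=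
    fun l => continuous_finset_sum _ fun i _ => (continuous_apply i).mul continuous_const
  have hclosed : IsClosed T := by
    rw [hT]
    have heq : {q : ↑𝒜 → ℝ | (∀ i, 0 ≤ q i) ∧ (∑ i, q i) = 1 ∧
        ∀ l : L, ∑ i, q i * (1 - (i : L → ℝ) l) ≤ μ l}
        = ((⋂ i, {q : ↑𝒜 → ℝ | 0 ≤ q i}) ∩ ({q : ↑𝒜 → ℝ | (∑ i, q i) = 1} ∩
          ⋂ l : L, {q : ↑𝒜 → ℝ | ∑ i, q i * (1 - (i : L → ℝ) l) ≤ μ l})) := by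
      ext q; simp [Set.mem_iInter]
    rw [heq]
    refine IsClosed.inter (isClosed_iInter fun i =>
        isClosed_le continuous_const (continuous_apply i)) (IsClosed.inter
        (isClosed_eq hc1 continuous_const)
        (isClosed_iInter fun l => isClosed_le (hc2 l) continuous_const))
  have hcomp : IsCompact T := IsCompact.of_isClosed_subset isCompact_Icc hclosed hsub
  have hcf : Continuous fun q : ↑𝒜 → ℝ => ∑ i, q i * H (i : L → ℝ) :=
    continuous_finset_sum _ fun i _ => (continuous_apply i).mul continuous_const
  obtain ⟨qopt, hqT, hmax⟩ := hcomp.exists_isMaxOn hTne hcf.continuousOn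
  exact ⟨qopt, hqT, fun q hq => hmax hq⟩

lemma euclid_sum_apply {κ ι : Type*} [Fintype κ] (s : Finset ι)
    (f : ι → EuclideanSpace ℝ κ) (k : κ) :
    (∑ i ∈ s, f i) k = ∑ i ∈ s, f i k := by
  induction s using Finset.cons_induction with
  | empty => rfl
  | cons i s hi ih => rw [Finset.sum_cons, Finset.sum_cons, PiLp.add_apply, ih]

/-- Strong duality for the decision-dependent distributionally robust second level:
if the ambiguity set `P(μ)` is nonempty, then there exist a primal optimal pmf `q*`
and a dual feasible point `(ψp*, ψm*, φ*)` with equal objective values, where `q*`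
maximizes the expected recourse cost over `P(μ)` and `(ψp*, ψm*, φ*)` minimizes the
dual objective over all dual feasible points. -/
theorem strong_duality_ddu_second_level
    {L : Type*} [Fintype L] [Nonempty L]
    (𝒜 : Finset (L → ℝ)) (h𝒜 : 𝒜.Nonempty)
    (hbin : ∀ a ∈ 𝒜, ∀ l : L, a l = 0 ∨ a l = 1)
    (μ : L → ℝ) (H : (L → ℝ) → ℝ)
    -- the ambiguity set P(μ) is nonempty
    (hne : ∃ q : (L → ℝ) → ℝ,
      (∀ a ∈ 𝒜, 0 ≤ q a) ∧ (∑ a ∈ 𝒜, q a = 1) ∧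
      (∀ l : L, ∑ a ∈ 𝒜, q a * (1 - a l) ≤ μ l)) :
    ∃ (qs : (L → ℝ) → ℝ) (ψps ψms : L → ℝ) (φs : ℝ),
      -- qs ∈ P(μ)
      ((∀ a ∈ 𝒜, 0 ≤ qs a) ∧ (∑ a ∈ 𝒜, qs a = 1) ∧
        (∀ l : L, ∑ a ∈ 𝒜, qs a * (1 - a l) ≤ μ l)) ∧
      -- (ψps, ψms, φs) is dual feasible
      ((∀ l : L, 0 ≤ ψps l) ∧ (∀ l : L, 0 ≤ ψms l) ∧
        (∀ a ∈ 𝒜, ∑ l : L, (ψps l - ψms l) * (1 - a l) + φs ≥ H a)) ∧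
      -- equal objective values
      (∑ a ∈ 𝒜, qs a * H a = ∑ l : L, ψps l * μ l + φs) ∧
      -- qs is primal optimal
      (∀ q : (L → ℝ) → ℝ,
        (∀ a ∈ 𝒜, 0 ≤ q a) → (∑ a ∈ 𝒜, q a = 1) →
        (∀ l : L, ∑ a ∈ 𝒜, q a * (1 - a l) ≤ μ l) →
        ∑ a ∈ 𝒜, q a * H a ≤ ∑ a ∈ 𝒜, qs a * H a) ∧
      -- (ψps, ψms, φs) is dual optimal
      (∀ (ψp ψm : L → ℝ) (φ : ℝ),
        (∀ l : L, 0 ≤ ψp l) → (∀ l : L, 0 ≤ ψm l) →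
        (∀ a ∈ 𝒜, ∑ l : L, (ψp l - ψm l) * (1 - a l) + φ ≥ H a) →
        ∑ l : L, ψps l * μ l + φs ≤ ∑ l : L, ψp l * μ l + φ) := by
  classical
  -- primal attainment
  set T : Set (↑𝒜 → ℝ) := {q : ↑𝒜 → ℝ | (∀ i, 0 ≤ q i) ∧ (∑ i, q i) = 1 ∧
      ∀ l : L, ∑ i, q i * (1 - (i : L → ℝ) l) ≤ μ l} with hTdef
  obtain ⟨q0, hq00, hq01, hq0c⟩ := hne
  have hTne : T.Nonempty := by
    refine ⟨fun i => q0 i, fun i => hq00 _ i.2, ?_, fun l => ?_⟩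
    · rw [Finset.sum_coe_sort 𝒜 q0]; exact hq01
    · rw [Finset.sum_coe_sort 𝒜 (fun a => q0 a * (1 - a l))]; exact hq0c l
  obtain ⟨qopt, hqoptT, hqoptMax⟩ := primal_attained 𝒜 μ H T hTdef hTne
  obtain ⟨hopt0, hopt1, hoptc⟩ := hqoptT
  set p : ℝ := ∑ i, qopt i * H (i : L → ℝ) with hpdef
  -- the optimal pmf extended to all scenarios
  set qs : (L → ℝ) → ℝ := fun a => if h : a ∈ 𝒜 then qopt ⟨a, h⟩ else 0 with hqsdef
  have hqs_sum : ∀ X : (L → ℝ) → ℝ, ∑ a ∈ 𝒜, qs a * X a = ∑ i : ↑𝒜, qopt i * X i := by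
    intro X
    rw [← Finset.sum_coe_sort 𝒜 (fun a => qs a * X a)]
    exact Finset.sum_congr rfl fun i _ => by rw [hqsdef]; simp [i.2]
  have hqs_feas : (∀ a ∈ 𝒜, 0 ≤ qs a) ∧ (∑ a ∈ 𝒜, qs a = 1) ∧
      (∀ l : L, ∑ a ∈ 𝒜, qs a * (1 - a l) ≤ μ l) := by
    refine ⟨fun a ha => by rw [hqsdef]; simp only [ha, dif_pos]; exact hopt0 ⟨a, ha⟩, ?_, fun l => ?_⟩
    · have := hqs_sum (fun _ => 1)
      simpa using this.trans (by simpa using hopt1)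
    · rw [hqs_sum (fun a => 1 - a l)]; exact hoptc l
  have hqs_obj : ∑ a ∈ 𝒜, qs a * H a = p := hqs_sum H
  -- primal optimality transfers
  have hprimal_opt : ∀ q : (L → ℝ) → ℝ,
      (∀ a ∈ 𝒜, 0 ≤ q a) → (∑ a ∈ 𝒜, q a = 1) →
      (∀ l : L, ∑ a ∈ 𝒜, q a * (1 - a l) ≤ μ l) →
      ∑ a ∈ 𝒜, q a * H a ≤ p := by
    intro q h0 h1 hcns
    have hmem : (fun i : ↑𝒜 => q i) ∈ T := by
      refine ⟨fun i => h0 _ i.2, ?_, fun l => ?_⟩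
      · rw [Finset.sum_coe_sort 𝒜 q]; exact h1
      · rw [Finset.sum_coe_sort 𝒜 (fun a => q a * (1 - a l))]; exact hcns l
    have := hqoptMax _ hmem
    rwa [Finset.sum_coe_sort 𝒜 (fun a => q a * H a)] at this
  -- Farkas setup
  set e1 : EuclideanSpace ℝ (Option ↑𝒜) := WithLp.toLp 2 (fun _ => 1) with he1
  set e1' : EuclideanSpace ℝ (Option ↑𝒜) := WithLp.toLp 2 (fun _ => (-1 : ℝ)) with he1'
  set eS : EuclideanSpace ℝ (Option ↑𝒜) := WithLp.toLp 2 (fun k => Option.elim k 1 (fun _ => 0)) with heS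
  set vψ : L → EuclideanSpace ℝ (Option ↑𝒜) :=
    fun l => WithLp.toLp 2 (fun k => Option.elim k (μ l) (fun a => 1 - (a : L → ℝ) l)) with hvψ
  set vs : ↑𝒜 → EuclideanSpace ℝ (Option ↑𝒜) :=
    fun a => WithLp.toLp 2 (fun k => Option.elim k 0 (fun a' => if a' = a then (-1 : ℝ) else 0)) with hvs
  set v : (L ⊕ (↑𝒜 ⊕ Fin 3)) → EuclideanSpace ℝ (Option ↑𝒜) :=
    Sum.elim vψ (Sum.elim vs ![e1, e1', eS]) with hv
  set bvec : EuclideanSpace ℝ (Option ↑𝒜) :=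
    WithLp.toLp 2 (fun k => Option.elim k p (fun a => H (a : L → ℝ))) with hbvec
  rcases farkas_cone v bvec with ⟨c, hcnn, hsol⟩ | ⟨y, hy, hyb⟩
  · -- dual solution extracted from the conic combination
    have hcomp : ∀ k, ∑ i, c i * v i k = bvec k := by
      intro k
      have h : (∑ i, c i • v i) k = bvec k := by rw [hsol]
      rw [euclid_sum_apply] at h
      simpa [PiLp.smul_apply, smul_eq_mul] using h
    set ψ : L → ℝ := fun l => c (Sum.inl l) with hψ
    set φ : ℝ := c (Sum.inr (Sum.inr 0)) - c (Sum.inr (Sum.inr 1)) with hφ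
    have hconstr : ∀ a : ↑𝒜,
        ∑ l, ψ l * (1 - (a : L → ℝ) l) - c (Sum.inr (Sum.inl a)) + φ = H (a : L → ℝ) := by
      intro a
      have h := hcomp (some a)
      rw [Fintype.sum_sum_type, Fintype.sum_sum_type, Fin.sum_univ_three] at h
      simp only [hv, Sum.elim_inl, Sum.elim_inr, hvψ, hvs, Option.elim, he1, he1', heS,
        hbvec, PiLp.toLp_apply, Matrix.cons_val_zero, Matrix.cons_val_one, Matrix.head_cons,
        Matrix.cons_val_two, Matrix.tail_cons, mul_ite, mul_neg_one, mul_zero, mul_one] at h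
      rw [Finset.sum_ite_eq Finset.univ a (fun a' => -c (Sum.inr (Sum.inl a')))] at h
      simp only [Finset.mem_univ, if_true] at h
      rw [hψ, hφ]
      linarith [h]
    have hvalue : ∑ l, ψ l * μ l + φ + c (Sum.inr (Sum.inr 2)) = p := by
      have h := hcomp none
      rw [Fintype.sum_sum_type, Fintype.sum_sum_type, Fin.sum_univ_three] at h
      simp only [hv, Sum.elim_inl, Sum.elim_inr, hvψ, hvs, Option.elim, he1, he1', heS,
        hbvec, PiLp.toLp_apply, Matrix.cons_val_zero, Matrix.cons_val_one, Matrix.head_cons,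
        Matrix.cons_val_two, Matrix.tail_cons, mul_zero, mul_one, mul_neg_one,
        Finset.sum_const_zero] at h
      rw [hψ, hφ]
      linarith [h]
    have hdualfeas : ∀ a ∈ 𝒜, ∑ l : L, (ψ l - 0) * (1 - a l) + φ ≥ H a := by
      intro a ha
      have h := hconstr ⟨a, ha⟩
      have hs := hcnn (Sum.inr (Sum.inl ⟨a, ha⟩))
      simp only [sub_zero]
      linarith [h, hs]
    have hdualval_le : ∑ l, ψ l * μ l + φ ≤ p := by
      have := hcnn (Sum.inr (Sum.inr 2)); linarith [hvalue]
    -- weak duality gives the reverse inequality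
    have hwd : p ≤ ∑ l, ψ l * μ l + φ := by
      have := weak_duality_ddu 𝒜 hbin μ H qs hqs_feas.1 hqs_feas.2.1 hqs_feas.2.2
        ψ (fun _ => 0) φ (fun l => hcnn (Sum.inl l)) (fun l => le_refl 0) hdualfeas
      rwa [hqs_obj] at this
    have heq : ∑ l, ψ l * μ l + φ = p := le_antisymm hdualval_le hwd
    refine ⟨qs, ψ, fun _ => 0, φ, hqs_feas,
      ⟨fun l => hcnn (Sum.inl l), fun l => le_refl 0, hdualfeas⟩,
      by rw [hqs_obj, heq], fun q h0 h1 hcns => by rw [hqs_obj]; exact hprimal_opt q h0 h1 hcns,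
      ?_⟩
    intro ψp ψm φ' hψp hψm hd
    rw [heq, ← hqs_obj]
    exact weak_duality_ddu 𝒜 hbin μ H qs hqs_feas.1 hqs_feas.2.1 hqs_feas.2.2
      ψp ψm φ' hψp hψm hd
  · -- the alternative contradicts primal optimality
    exfalso
    have hinner : ∀ x z : EuclideanSpace ℝ (Option ↑𝒜),
        ⟪x, z⟫_ℝ = x none * z none + ∑ a : ↑𝒜, x (some a) * z (some a) := by
      intro x z
      rw [PiLp.inner_apply]
      simp only [RCLike.inner_apply, starRingEnd_apply, star_trivial]
      rw [Fintype.sum_option]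
      congr 1
      · ring
      · exact Finset.sum_congr rfl fun _ _ => mul_comm _ _
    have hyneg : ∀ a : ↑𝒜, y (some a) ≤ 0 := by
      intro a
      have h := hy (Sum.inr (Sum.inl a))
      rw [hinner] at h
      simp only [hv, Sum.elim_inr, Sum.elim_inl, hvs, PiLp.toLp_apply, Option.elim, zero_mul, ite_mul,
        neg_one_mul, zero_add] at h
      rw [Finset.sum_ite_eq' Finset.univ a (fun a' => -y (some a'))] at h
      simp only [Finset.mem_univ, if_true] at h
      linarith
    have hy0 : 0 ≤ y none := by
      have h := hy (Sum.inr (Sum.inr 2))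
      rw [hinner] at h
      simp only [hv, Sum.elim_inr, Matrix.cons_val_two, Matrix.tail_cons, Matrix.head_cons,
        heS, PiLp.toLp_apply, Option.elim, one_mul, zero_mul, Finset.sum_const_zero, add_zero] at h
      linarith
    have hsum0 : y none + ∑ a : ↑𝒜, y (some a) = 0 := by
      have h1 := hy (Sum.inr (Sum.inr 0))
      have h2 := hy (Sum.inr (Sum.inr 1))
      rw [hinner] at h1 h2
      simp only [hv, Sum.elim_inr, Matrix.cons_val_zero, Matrix.cons_val_one,
        Matrix.head_cons, he1, he1', PiLp.toLp_apply, one_mul, neg_one_mul, Finset.sum_neg_distrib] at h1 h2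
      linarith
    have hconstr : ∀ l : L, 0 ≤ μ l * y none + ∑ a : ↑𝒜, (1 - (a : L → ℝ) l) * y (some a) := by
      intro l
      have h := hy (Sum.inl l)
      rw [hinner] at h
      simpa [hv, hvψ, PiLp.toLp_apply, Option.elim] using h
    have hybv : y none * p + ∑ a : ↑𝒜, y (some a) * H (a : L → ℝ) < 0 := by
      rw [hinner] at hyb
      simpa only [hbvec, PiLp.toLp_apply, Option.elim] using hyb
    rcases eq_or_lt_of_le hy0 with h0 | hpos
    · -- y none = 0 : all components vanish
      have hall : ∀ a : ↑𝒜, y (some a) = 0 := by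
        intro a
        have hsum : ∑ a : ↑𝒜, (- y (some a)) = 0 := by
          rw [Finset.sum_neg_distrib]; rw [← h0] at hsum0; linarith
        have := (Finset.sum_eq_zero_iff_of_nonneg
          (fun a _ => neg_nonneg.mpr (hyneg a))).mp hsum a (Finset.mem_univ a)
        linarith
      rw [← h0] at hybv
      simp only [hall, zero_mul, mul_zero, Finset.sum_const_zero, add_zero] at hybv
      linarith [hybv]
    · -- y none > 0 : rescaled y is a primal-feasible point beating the optimum
      set qE : ↑𝒜 → ℝ := fun a => - y (some a) / y none with hqE
      have hqET : qE ∈ T := by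
        refine ⟨fun a => div_nonneg (neg_nonneg.mpr (hyneg a)) hpos.le, ?_, fun l => ?_⟩
        · rw [hqE]
          simp only [← Finset.sum_div, Finset.sum_neg_distrib]
          rw [div_eq_one_iff_eq (ne_of_gt hpos)]
          linarith [hsum0]
        · rw [hqE]
          have : ∑ a : ↑𝒜, - y (some a) / y none * (1 - (a : L → ℝ) l)
              = (∑ a : ↑𝒜, (1 - (a : L → ℝ) l) * (- y (some a))) / y none := by
            rw [Finset.sum_div]
            exact Finset.sum_congr rfl fun a _ => by ring
          rw [this, div_le_iff₀ hpos]
          have := hconstr l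
          have hexp : ∑ a : ↑𝒜, (1 - (a : L → ℝ) l) * (- y (some a))
              = - ∑ a : ↑𝒜, (1 - (a : L → ℝ) l) * y (some a) := by
            rw [← Finset.sum_neg_distrib]
            exact Finset.sum_congr rfl fun a _ => by ring
          rw [hexp]
          linarith
      have hle := hqoptMax qE hqET
      have hgt : p < ∑ a : ↑𝒜, qE a * H (a : L → ℝ) := by
        rw [hqE]
        have : ∑ a : ↑𝒜, - y (some a) / y none * H (a : L → ℝ)
            = (- ∑ a : ↑𝒜, y (some a) * H (a : L → ℝ)) / y none := by
          rw [← Finset.sum_neg_distrib, Finset.sum_div]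
          exact Finset.sum_congr rfl fun a _ => by ring
        rw [this, lt_div_iff₀ hpos]
        nlinarith [hybv]
      linarith [hle, hgt]
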